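/- Margin-tail regret transfer: Let X be a random context in a measurable space 𝒳, let D be a finite nonempty decision set, z : 𝒳 × D → ℝ^J a factor map with sup_{x,d} ‖z(x,d)‖₂ ≤ B_z, and w*, ŵ : 𝒳 → ℝ^J measurable with ŵ − w* square-integrable. For each x define scores s*_x(d) = ⟨w*(x), z(x,d)⟩ and ŝ_x(d) = ⟨ŵ(x), z(x,d)⟩, the oracle margin γ(x) (gap between the best and second-best true scores, zero if the oracle optimum is not unique), the regret R(x) = s*_x(d*(x)) − s*_x(d̂(x)) where d*(x) maximizes s*_x and d̂(x) maximizes ŝ_x, and suppose the margin lower-tail condition P(γ(X) ≤ t) ≤ C_mar t^α holds for all t > 0, for some constants C_mar, α > 0. Then there exists a constant C depending only on B_z, C_mar, and α such that E[R(X)] ≤ C · ( E[‖ŵ(X) − w*(X)‖₂²] )^{(1+α)/(2+α)}. -/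

import Mathlib

open MeasureTheory

/-- **Margin-tail regret transfer.** There is a constant `C` depending only on the
factor bound `Bz`, the margin-tail constant `Cmar`, and the tail exponent `α` such
that, for any finite-library contextual decision problem with factors bounded by
`Bz`, square-integrable weight-estimation error, and margin lower-tail condition
`P(γ(X) ≤ t) ≤ Cmar t^α` for all `t > 0`, the expected regret satisfies
`E[R(X)] ≤ C (E[‖ŵ(X) - w*(X)‖²])^{(1+α)/(2+α)}`. -/
theorem margin_tail_regret_transfer
    (Bz Cmar α : ℝ) (hBz : 0 ≤ Bz) (hCmar : 0 < Cmar) (hα : 0 < α) :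
    ∃ C : ℝ, 0 < C ∧
      ∀ (J : ℕ) (Ω 𝒳 : Type) [MeasurableSpace Ω] [MeasurableSpace 𝒳]
        (μ : Measure Ω) [IsProbabilityMeasure μ]
        (D : Type) [Fintype D] [Nonempty D] [DecidableEq D]
        (X : Ω → 𝒳) (_hX : Measurable X)
        (z : 𝒳 → D → EuclideanSpace ℝ (Fin J))
        (_hz : ∀ x d, ‖z x d‖ ≤ Bz)
        (wstar what : 𝒳 → EuclideanSpace ℝ (Fin J))
        (_hwstar : Measurable wstar) (_hwhat : Measurable what)
        (_hL2 : Integrable (fun ω => ‖what (X ω) - wstar (X ω)‖ ^ 2) μ)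
        (dstar dhat : 𝒳 → D)
        (_hdstar : ∀ x d,
          (inner ℝ (wstar x) (z x d) : ℝ) ≤ (inner ℝ (wstar x) (z x (dstar x)) : ℝ))
        (_hdhat : ∀ x d,
          (inner ℝ (what x) (z x d) : ℝ) ≤ (inner ℝ (what x) (z x (dhat x)) : ℝ))
        (γ : 𝒳 → ℝ)
        (_hγ : ∀ x, γ x =
          if hne : (Finset.univ.erase (dstar x)).Nonempty
          then (inner ℝ (wstar x) (z x (dstar x)) : ℝ) -
            (Finset.univ.erase (dstar x)).sup' hne
              (fun d => (inner ℝ (wstar x) (z x d) : ℝ))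
          else 0)
        (R : 𝒳 → ℝ)
        (_hR : ∀ x, R x =
          (inner ℝ (wstar x) (z x (dstar x)) : ℝ) -
            (inner ℝ (wstar x) (z x (dhat x)) : ℝ))
        (_htail : ∀ t : ℝ, 0 < t →
          (μ {ω | γ (X ω) ≤ t}).toReal ≤ Cmar * t ^ α),
        ∫ ω, R (X ω) ∂μ
          ≤ C * (∫ ω, ‖what (X ω) - wstar (X ω)‖ ^ 2 ∂μ)
              ^ ((1 + α) / (2 + α)) := by
  refine ⟨Bz + 4 * Bz ^ 2 + Bz * Cmar + 1, by positivity, ?_⟩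
  intro J Ω 𝒳 _ _ μ _ D _ _ _ X hX z hz wstar what hwstar hwhat hL2 dstar dhat
    hdstar hdhat γ hγ R hR htail
  set ε : ℝ := ∫ ω, ‖what (X ω) - wstar (X ω)‖ ^ 2 ∂μ with hεdef
  clear_value ε
  have hε0 : 0 ≤ ε := hεdef ▸ integral_nonneg fun ω => by positivity
  have h2α : (2 : ℝ) + α ≠ 0 := by positivity
  -- basic pointwise facts
  have hR0 : ∀ x, 0 ≤ R x := by
    intro x
    rw [hR x]
    exact sub_nonneg.2 (hdstar x (dhat x))
  have hRle : ∀ x, R x ≤ 2 * Bz * ‖what x - wstar x‖ := by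
    intro x
    have h1 := hdhat x (dstar x)
    have e1 : (inner ℝ (wstar x - what x) (z x (dstar x)) : ℝ)
        ≤ ‖what x - wstar x‖ * Bz := by
      calc (inner ℝ (wstar x - what x) (z x (dstar x)) : ℝ)
          ≤ ‖wstar x - what x‖ * ‖z x (dstar x)‖ := real_inner_le_norm _ _
        _ ≤ ‖what x - wstar x‖ * Bz := by
            rw [norm_sub_rev]
            exact mul_le_mul_of_nonneg_left (hz x _) (norm_nonneg _)
    have e2 : (inner ℝ (what x - wstar x) (z x (dhat x)) : ℝ)
        ≤ ‖what x - wstar x‖ * Bz := by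
      calc (inner ℝ (what x - wstar x) (z x (dhat x)) : ℝ)
          ≤ ‖what x - wstar x‖ * ‖z x (dhat x)‖ := real_inner_le_norm _ _
        _ ≤ ‖what x - wstar x‖ * Bz :=
            mul_le_mul_of_nonneg_left (hz x _) (norm_nonneg _)
    rw [inner_sub_left] at e1 e2
    rw [hR x]
    linarith
  have hγR : ∀ x, 0 < R x → γ x ≤ R x := by
    intro x hx
    have hmem : dhat x ∈ Finset.univ.erase (dstar x) := by
      refine Finset.mem_erase.2 ⟨?_, Finset.mem_univ _⟩
      intro h
      rw [hR x, h, sub_self] at hx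
      exact lt_irrefl 0 hx
    have hne : (Finset.univ.erase (dstar x)).Nonempty := ⟨_, hmem⟩
    rw [hγ x, dif_pos hne, hR x]
    have hsup : (inner ℝ (wstar x) (z x (dhat x)) : ℝ)
        ≤ (Finset.univ.erase (dstar x)).sup' hne
            (fun d => (inner ℝ (wstar x) (z x d) : ℝ)) :=
      Finset.le_sup' (fun d => (inner ℝ (wstar x) (z x d) : ℝ)) hmem
    linarith
  rcases eq_or_lt_of_le hε0 with hεz | hεpos
  · -- the estimation error is a.e. zero, hence the regret is a.e. zero
    have hz0 : (fun ω => ‖what (X ω) - wstar (X ω)‖ ^ 2) =ᵐ[μ] 0 :=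
      (integral_eq_zero_iff_of_nonneg (fun ω => by positivity) hL2).1
        (hεdef ▸ hεz.symm)
    have hae : (fun ω => R (X ω)) =ᵐ[μ] (fun _ => (0 : ℝ)) := by
      filter_upwards [hz0] with ω hω
      have hω' : ‖what (X ω) - wstar (X ω)‖ ^ 2 = 0 := hω
      have hn : ‖what (X ω) - wstar (X ω)‖ = 0 := by
        nlinarith [norm_nonneg (what (X ω) - wstar (X ω))]
      have h1 := hRle (X ω)
      have h2 := hR0 (X ω)
      rw [hn] at h1
      linarith
    have hz' : ∫ ω, R (X ω) ∂μ = 0 := by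
      rw [integral_congr_ae hae]; simp
    rw [hz']
    exact mul_nonneg (by positivity) (Real.rpow_nonneg hε0 _)
  · by_cases hInt : Integrable (fun ω => R (X ω)) μ
    · set t : ℝ := ε ^ ((1 : ℝ) / (2 + α)) with htdef
      have ht : 0 < t := Real.rpow_pos_of_pos hεpos _
      clear_value t
      set A : Set Ω := {ω | γ (X ω) ≤ t} with hAdef
      set A' : Set Ω := toMeasurable μ A with hA'def
      have hA' : MeasurableSet A' := measurableSet_toMeasurable μ A
      have hsub : A ⊆ A' := subset_toMeasurable μ A
      have hμeq : μ A' = μ A := measure_toMeasurable A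
      clear_value A'
      have hind0 : ∀ ω, 0 ≤ A'.indicator (fun _ => Bz * t) ω := by
        intro ω
        exact Set.indicator_nonneg (fun _ _ => by positivity) ω
      -- pointwise master bound
      have hpt : ∀ ω, R (X ω) ≤ (Bz + 4 * Bz ^ 2) / t * ‖what (X ω) - wstar (X ω)‖ ^ 2
          + A'.indicator (fun _ => Bz * t) ω := by
        intro ω
        set u : ℝ := ‖what (X ω) - wstar (X ω)‖ with hudef
        have hu0 : 0 ≤ u := norm_nonneg _
        have h1 : R (X ω) ≤ 2 * Bz * u := hRle (X ω)
        clear_value u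
        by_cases hγt : γ (X ω) ≤ t
        · have hmem : ω ∈ A' := hsub hγt
          rw [Set.indicator_of_mem hmem]
          have key : R (X ω) * t ≤ (Bz + 4 * Bz ^ 2) * u ^ 2 + Bz * t * t := by
            nlinarith [mul_le_mul_of_nonneg_right h1 ht.le, sq_nonneg (u - t),
              sq_nonneg Bz, sq_nonneg u, mul_nonneg hBz (sq_nonneg u)]
          have h2 : R (X ω) ≤ ((Bz + 4 * Bz ^ 2) * u ^ 2 + Bz * t * t) / t :=
            (le_div_iff₀ ht).2 key
          calc R (X ω) ≤ ((Bz + 4 * Bz ^ 2) * u ^ 2 + Bz * t * t) / t := h2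
            _ = (Bz + 4 * Bz ^ 2) / t * u ^ 2 + Bz * t := by
                field_simp
        · rcases eq_or_lt_of_le (hR0 (X ω)) with h0 | hpos
          · have hnn : 0 ≤ (Bz + 4 * Bz ^ 2) / t * u ^ 2 := by positivity
            have h2 := hind0 ω
            linarith [h0.symm.le]
          · have hgt : t < γ (X ω) := lt_of_not_ge hγt
            have hgr : γ (X ω) ≤ R (X ω) := hγR (X ω) hpos
            have hRt : t < R (X ω) := lt_of_lt_of_le hgt hgr
            have key : R (X ω) * t ≤ (Bz + 4 * Bz ^ 2) * u ^ 2 := by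
              nlinarith [mul_lt_mul_of_pos_left hRt hpos,
                mul_self_le_mul_self (hR0 (X ω)) h1, mul_nonneg hBz (sq_nonneg u)]
            have h2 : R (X ω) ≤ (Bz + 4 * Bz ^ 2) / t * u ^ 2 := by
              rw [div_mul_eq_mul_div, le_div_iff₀ ht]
              linarith [key]
            exact le_add_of_le_of_nonneg h2 (hind0 ω)
      have hint1 : Integrable
          (fun ω => (Bz + 4 * Bz ^ 2) / t * ‖what (X ω) - wstar (X ω)‖ ^ 2) μ :=
        hL2.const_mul _
      have hint2 : Integrable (fun ω => A'.indicator (fun _ => Bz * t) ω) μ :=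
        (integrable_const (Bz * t)).indicator hA'
      have hle : ∫ ω, R (X ω) ∂μ
          ≤ ∫ ω, ((Bz + 4 * Bz ^ 2) / t * ‖what (X ω) - wstar (X ω)‖ ^ 2
              + A'.indicator (fun _ => Bz * t) ω) ∂μ :=
        integral_mono hInt (hint1.add hint2) hpt
      rw [integral_add hint1 hint2, integral_const_mul,
        integral_indicator_const _ hA', smul_eq_mul, ← hεdef] at hle
      have hμA : (μ A').toReal ≤ Cmar * t ^ α := by
        rw [hμeq]
        exact htail t ht
      have hstep : ∫ ω, R (X ω) ∂μ
          ≤ (Bz + 4 * Bz ^ 2) / t * ε + Cmar * t ^ α * (Bz * t) := by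
        refine hle.trans ?_
        have hh := mul_le_mul_of_nonneg_right hμA (by positivity : (0:ℝ) ≤ Bz * t)
        rw [measureReal_def]
        linarith
      -- rpow algebra
      have hεp : (0 : ℝ) ≤ ε ^ ((1 + α) / (2 + α)) := Real.rpow_nonneg hε0 _
      have emul : ε ^ ((1 + α) / (2 + α)) * ε ^ ((1 : ℝ) / (2 + α)) = ε := by
        rw [← Real.rpow_add hεpos, ← add_div,
          show (1 + α + 1 : ℝ) = 2 + α by ring, div_self h2α, Real.rpow_one]
      have ediv : ε / t = ε ^ ((1 + α) / (2 + α)) := by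
        rw [div_eq_iff (ne_of_gt ht), htdef]
        exact emul.symm
      have e1 : (Bz + 4 * Bz ^ 2) / t * ε
          = (Bz + 4 * Bz ^ 2) * ε ^ ((1 + α) / (2 + α)) := by
        rw [div_mul_eq_mul_div, mul_div_assoc, ediv]
      have e2 : Cmar * t ^ α * (Bz * t)
          = Bz * Cmar * ε ^ ((1 + α) / (2 + α)) := by
        have htα : t ^ α * t = ε ^ ((1 + α) / (2 + α)) := by
          rw [htdef, ← Real.rpow_mul hε0, ← Real.rpow_add hεpos]
          congr 1
          field_simp
          ring
        calc Cmar * t ^ α * (Bz * t) = Bz * Cmar * (t ^ α * t) := by ring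
          _ = Bz * Cmar * ε ^ ((1 + α) / (2 + α)) := by rw [htα]
      rw [e1, e2] at hstep
      have hfin : (Bz + 4 * Bz ^ 2) * ε ^ ((1 + α) / (2 + α))
          + Bz * Cmar * ε ^ ((1 + α) / (2 + α))
          ≤ (Bz + 4 * Bz ^ 2 + Bz * Cmar + 1) * ε ^ ((1 + α) / (2 + α)) := by
        nlinarith [hεp]
      linarith
    · rw [integral_undef hInt]
      exact mul_nonneg (by positivity) (Real.rpow_nonneg hε0 _)
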